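/- Let O_L/O_M be a quadratic extension of Dedekind domains with fraction fields L/M, where L/M is a degree-2 field extension. For each nonzero ideal I of O_M, define O_I := O_M + I·O_L. Then O_I is a ring (an O_M-order in L), every O_M-order O with O_M ⊆ O ⊆ O_L equals O_I for some nonzero ideal I, the O_M-conductor of O_I is I, and O_J ⊆ O_I if and only if J ⊆ I. In particular the correspondence I ↦ O_I is an inclusion-preserving bijection between nonzero ideals of O_M and intermediate orders. -/

import Mathlib

/-- `(I • T) * (I • T) ≤ I • T` when `T` is multiplicatively closed. -/
lemma aux_smul_mul {A L : Type} [CommRing A] [CommRing L] [Algebra A L]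
    (I : Ideal A) (T : Submodule A L) (hT : T * T ≤ T) :
    (I • T) * (I • T) ≤ I • T := by
  refine Submodule.mul_le.2 fun x hx y hy => ?_
  refine Submodule.smul_induction_on hx ?_ ?_
  · intro a ha t ht
    refine Submodule.smul_induction_on hy ?_ ?_
    · intro b hb s hs
      rw [smul_mul_assoc, mul_smul_comm]
      exact Submodule.smul_mem_smul ha (T.smul_mem b (hT (Submodule.mul_mem_mul ht hs)))
    · intro y1 y2 h1 h2
      rw [mul_add]
      exact Submodule.add_mem _ h1 h2
  · intro x1 x2 h1 h2
    rw [add_mul]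
    exact Submodule.add_mem _ h1 h2

lemma aux_smul_eq {A M : Type} [CommRing A] [CommRing M] [Algebra A M]
    (I : Ideal A) (q : Submodule A M) :
    I • q = Submodule.map (Algebra.linearMap A M) I * q := by
  apply le_antisymm
  · rw [Submodule.smul_le]
    intro a ha x hx
    rw [Algebra.smul_def]
    exact Submodule.mul_mem_mul (Submodule.mem_map_of_mem ha) hx
  · rw [Submodule.mul_le]
    rintro y hy x hx
    obtain ⟨a, ha, rfl⟩ := Submodule.mem_map.mp hy
    have : Algebra.linearMap A M a * x = a • x := by
      simp [Algebra.smul_def]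
    rw [this]
    exact Submodule.smul_mem_smul ha hx

/-- Cancellation and decomposition for a fixed nonzero finitely generated
submodule `q` of the fraction field of a Dedekind domain. -/
lemma aux_dedekind {A M : Type} [CommRing A] [IsDedekindDomain A] [Field M]
    [Algebra A M] [IsFractionRing A M] {q : Submodule A M} (hfg : q.FG) (hq0 : q ≠ ⊥) :
    (∀ I J : Ideal A, I • q ≤ J • q → I ≤ J) ∧
    (∀ N : Submodule A M, N ≤ q → N ≠ ⊥ → ∃ I : Ideal A, I ≠ ⊥ ∧ N = I • q) := by
  set Q : FractionalIdeal (nonZeroDivisors A) M := ⟨q, FractionalIdeal.isFractional_of_fg hfg⟩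
    with hQ
  have hQcoe : (Q : Submodule A M) = q := rfl
  have hQ0 : Q ≠ 0 := by
    intro h
    apply hq0
    rw [← hQcoe, h, FractionalIdeal.coe_zero]
  have hsmul : ∀ I : Ideal A, ((I : FractionalIdeal (nonZeroDivisors A) M) * Q : FractionalIdeal (nonZeroDivisors A) M)
      = (I • q : Submodule A M) := by
    intro I
    rw [FractionalIdeal.coe_mul, hQcoe, FractionalIdeal.coe_coeIdeal, aux_smul_eq]
    rfl
  constructor
  · intro I J h
    have h' : (I : FractionalIdeal (nonZeroDivisors A) M) * Q ≤ (J : FractionalIdeal (nonZeroDivisors A) M) * Q := by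
      rw [← FractionalIdeal.coe_le_coe, hsmul, hsmul]
      exact h
    have h2 : (I : FractionalIdeal (nonZeroDivisors A) M) * Q * Q⁻¹ ≤ (J : FractionalIdeal (nonZeroDivisors A) M) * Q * Q⁻¹ := by
      have := mul_left_mono (a := Q⁻¹) h'
      simpa using this
    rw [mul_assoc, mul_assoc, mul_inv_cancel₀ hQ0, mul_one, mul_one] at h2
    exact (FractionalIdeal.coeIdeal_le_coeIdeal M).mp h2
  · intro N hNq hN0
    have hNfrac : IsFractional (nonZeroDivisors A) N :=
      FractionalIdeal.isFractional_of_le (J := Q) (by rw [hQcoe]; exact hNq)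
    set NN : FractionalIdeal (nonZeroDivisors A) M := ⟨N, hNfrac⟩ with hNN
    have hNNcoe : (NN : Submodule A M) = N := rfl
    have hle : NN ≤ Q := by rw [← FractionalIdeal.coe_le_coe, hNNcoe, hQcoe]; exact hNq
    have hle1 : NN * Q⁻¹ ≤ 1 := by
      have h := mul_left_mono (a := Q⁻¹) hle
      simp only at h
      rwa [mul_inv_cancel₀ hQ0] at h
    obtain ⟨I, hI⟩ := FractionalIdeal.le_one_iff_exists_coeIdeal.mp hle1
    have hIQ : (I : FractionalIdeal (nonZeroDivisors A) M) * Q = NN := by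
      rw [hI, mul_assoc, mul_comm Q⁻¹ Q, mul_inv_cancel₀ hQ0, mul_one]
    refine ⟨I, ?_, ?_⟩
    · rintro rfl
      apply hN0
      rw [← hNNcoe, ← hIQ, FractionalIdeal.coeIdeal_bot, zero_mul, FractionalIdeal.coe_zero]
    · rw [← hNNcoe, ← hIQ, hsmul]


/-- The `A`-submodule `O_I := A + I·O_L` of `L`, where `O_L` is the integral closure
of `A` in `L`. -/
def orderOfIdeal (A L : Type) [CommRing A] [CommRing L] [Algebra A L] (I : Ideal A) :
    Submodule A L :=
  Subalgebra.toSubmodule (⊥ : Subalgebra A L) ⊔ I • Subalgebra.toSubmodule (integralClosure A L)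

/-- Classification of orders in a quadratic extension of Dedekind domains:
`I ↦ O_I = O_M + I·O_L` is an inclusion-preserving bijection between nonzero ideals of
`O_M` and intermediate orders, each `O_I` is a ring, every intermediate order is some
`O_I`, and the `O_M`-conductor of `O_I` is `I`. -/
theorem orders_in_quadratic_extension (A M L : Type) [CommRing A] [IsDedekindDomain A]
    [Field M] [Field L] [Algebra A M] [IsFractionRing A M]
    [Algebra M L] [Algebra A L] [IsScalarTower A M L]
    (h2 : Module.finrank M L = 2)
    [IsDedekindDomain (integralClosure A L)]
    [Module.Finite A (integralClosure A L)] :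
    -- each `O_I` is a ring, i.e. an intermediate order
    (∀ I : Ideal A, I ≠ ⊥ → ∃ S : Subalgebra A L,
        Subalgebra.toSubmodule S = orderOfIdeal A L I ∧ S ≤ integralClosure A L) ∧
    -- every intermediate order is of the form `O_I` for a nonzero ideal `I`
    (∀ O : Subalgebra A L, O ≠ ⊥ → O ≤ integralClosure A L →
        ∃ I : Ideal A, I ≠ ⊥ ∧ Subalgebra.toSubmodule O = orderOfIdeal A L I) ∧
    -- the `O_M`-conductor of `O_I` is exactly `I`
    (∀ I : Ideal A, I ≠ ⊥ → ∀ a : A,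
        ((∀ x : L, x ∈ integralClosure A L → a • x ∈ orderOfIdeal A L I) ↔ a ∈ I)) ∧
    -- the correspondence preserves (and reflects) inclusions; in particular injective
    (∀ I J : Ideal A, I ≠ ⊥ → J ≠ ⊥ →
        (orderOfIdeal A L J ≤ orderOfIdeal A L I ↔ J ≤ I)) := by
  haveI : FiniteDimensional M L := Module.finite_of_finrank_pos (by rw [h2]; norm_num)
  set T : Submodule A L := Subalgebra.toSubmodule (integralClosure A L) with hT
  have hTT : T * T ≤ T := Submodule.mul_le.2 fun x hx y hy =>
    (Subalgebra.mem_toSubmodule _).mpr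
      (mul_mem ((Subalgebra.mem_toSubmodule _).mp hx) ((Subalgebra.mem_toSubmodule _).mp hy))
  have h1T : (1 : Submodule A L) ≤ T :=
    Submodule.one_le.2 ((Subalgebra.mem_toSubmodule _).mpr (one_mem _))
  have hIT : ∀ I : Ideal A, I • T ≤ T :=
    fun I => Submodule.smul_le.2 fun a _ x hx => T.smul_mem a hx
  have hOrder : ∀ I : Ideal A, orderOfIdeal A L I = 1 ⊔ I • T := by
    intro I
    rw [orderOfIdeal, Algebra.toSubmodule_bot]
  have hOle : ∀ I : Ideal A, orderOfIdeal A L I ≤ T := by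
    intro I
    rw [hOrder]
    exact sup_le h1T (hIT I)
  have h1O : ∀ I : Ideal A, (1 : Submodule A L) ≤ orderOfIdeal A L I := by
    intro I
    rw [hOrder]
    exact le_sup_left
  -- find an integral element θ not in the image of M
  obtain ⟨x, hx⟩ : ∃ x : L, x ∉ (⊥ : Subalgebra M L) := by
    by_contra h
    push_neg at h
    have hbt : (⊥ : Subalgebra M L) = ⊤ := top_unique fun x _ => h x
    have := Subalgebra.bot_eq_top_iff_finrank_eq_one.mp hbt
    rw [h2] at this
    norm_num at this
  have hxM : ¬∃ m : M, algebraMap M L m = x := by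
    intro ⟨m, hm⟩
    exact hx (by rw [Algebra.mem_bot]; exact ⟨m, hm⟩)
  have hinjML : Function.Injective (algebraMap M L) := (algebraMap M L).injective
  have hinjAM : Function.Injective (algebraMap A M) := IsFractionRing.injective A M
  have hxalg : IsAlgebraic A x := by
    rw [IsFractionRing.isAlgebraic_iff A M L]
    exact (Algebra.IsAlgebraic.of_finite M L).isAlgebraic x
  have hinjAL : Function.Injective (algebraMap A L) := by
    rw [IsScalarTower.algebraMap_eq A M L]
    exact hinjML.comp hinjAM
  obtain ⟨θ', y, hy0, hyx⟩ : ∃ θ' : integralClosure A L, ∃ y : A, y ≠ 0 ∧ algebraMap A L y * x = θ' := by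
    obtain ⟨y, hy0, hyint⟩ := hxalg.exists_integral_multiple
    exact ⟨⟨y • x, hyint⟩, y, hy0, (Algebra.smul_def y x).symm⟩
  set θ : L := (θ' : L) with hθdef
  have hθint : θ ∈ integralClosure A L := θ'.2
  have hθM : ¬∃ m : M, algebraMap M L m = θ := by
    rintro ⟨m, hm⟩
    apply hxM
    have hy0' : algebraMap A M y ≠ 0 := fun h => hy0 (hinjAM (by rw [h, map_zero]))
    have hyL : algebraMap M L (algebraMap A M y) ≠ 0 :=
      fun h => hy0' (hinjML (by rw [h, map_zero]))
    have hyx' : algebraMap M L (algebraMap A M y) * x = θ := by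
      rw [← IsScalarTower.algebraMap_apply]
      exact hyx
    refine ⟨m / algebraMap A M y, ?_⟩
    rw [map_div₀, hm, ← hyx']
    rw [mul_comm, mul_div_assoc, div_self hyL, mul_one]
  -- basis ![θ, 1]
  have hli : LinearIndependent M ![θ, (1 : L)] := by
    rw [linearIndependent_fin2]
    refine ⟨by simp, fun a ha => ?_⟩
    apply hθM
    refine ⟨a, ?_⟩
    simp only [Matrix.cons_val_zero, Matrix.cons_val_one, Matrix.head_cons] at ha
    rw [Algebra.algebraMap_eq_smul_one]
    exact ha
  have hcard : Fintype.card (Fin 2) = Module.finrank M L := by simp [h2]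
  set b : Module.Basis (Fin 2) M L := basisOfLinearIndependentOfCardEqFinrank hli hcard with hbdef
  have hb : ⇑b = ![θ, (1 : L)] := coe_basisOfLinearIndependentOfCardEqFinrank hli hcard
  have hb0 : b 0 = θ := by rw [hb]; rfl
  have hb1 : b 1 = (1 : L) := by rw [hb]; rfl
  set π : L →ₗ[A] M := (b.coord 0).restrictScalars A with hπdef
  have hπθ : π θ = 1 := by
    rw [hπdef, ← hb0]
    simp [Module.Basis.coord_apply]
  have hπ1 : π 1 = 0 := by
    rw [hπdef, ← hb1]
    simp [Module.Basis.coord_apply]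
  have hker : ∀ z : L, π z = 0 → ∃ m : M, algebraMap M L m = z := by
    intro z hz
    refine ⟨b.repr z 1, ?_⟩
    have hsum := b.sum_repr z
    rw [Fin.sum_univ_two, hb0, hb1] at hsum
    have hz0 : b.repr z 0 = 0 := hz
    rw [hz0, zero_smul, zero_add] at hsum
    rw [Algebra.algebraMap_eq_smul_one]
    exact hsum
  have hkerT : ∀ z ∈ T, π z = 0 → ∃ a : A, algebraMap A L a = z := by
    intro z hzT hz
    obtain ⟨m, hm⟩ := hker z hz
    have hint : IsIntegral A z := hzT
    rw [← hm] at hint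
    have : IsIntegral A m := (isIntegral_algebraMap_iff hinjML).mp hint
    obtain ⟨a, ha⟩ := IsIntegrallyClosed.isIntegral_iff.mp this
    refine ⟨a, ?_⟩
    rw [IsScalarTower.algebraMap_apply A M L, ha, hm]
  -- the module q
  set q : Submodule A M := Submodule.map π T with hq
  have hTfg : T.FG := by
    rw [← Module.Finite.iff_fg]
    exact ‹Module.Finite A (integralClosure A L)›
  have hqfg : q.FG := hTfg.map π
  have hq0 : q ≠ ⊥ := by
    intro h
    have : π θ ∈ q := Submodule.mem_map_of_mem hθint
    rw [h, Submodule.mem_bot, hπθ] at this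
    exact one_ne_zero this
  obtain ⟨hcancel, hdecomp⟩ := aux_dedekind hqfg hq0
  -- image of orderOfIdeal under π
  have hπ1sub : Submodule.map π (1 : Submodule A L) = ⊥ := by
    rw [Submodule.one_eq_span, Submodule.map_span]
    simp [hπ1]
  have himg : ∀ I : Ideal A, Submodule.map π (orderOfIdeal A L I) = I • q := by
    intro I
    rw [hOrder, Submodule.map_sup, hπ1sub, Submodule.map_smul'', bot_sup_eq, hq]
  -- sandwich lemma
  have hS : ∀ N N' : Submodule A L, N ≤ T → N' ≤ T → (1 : Submodule A L) ≤ N' →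
      Submodule.map π N ≤ Submodule.map π N' → N ≤ N' := by
    intro N N' hN hN' h1N' hmap x hx
    obtain ⟨y, hy, hyx⟩ := hmap (Submodule.mem_map_of_mem hx)
    have hzero : π (x - y) = 0 := by rw [map_sub, hyx, sub_self]
    obtain ⟨a, ha⟩ := hkerT (x - y) (sub_mem (hN hx) (hN' hy)) hzero
    have hxy : x = y + algebraMap A L a := by rw [ha]; ring
    rw [hxy]
    exact add_mem hy (h1N' (Submodule.mem_one.mpr ⟨a, rfl⟩))
  refine ⟨?_, ?_, ?_, ?_⟩
  -- Part 1: orderOfIdeal is a subalgebra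
  · intro I _
    have hmem : ∀ w ∈ orderOfIdeal A L I, ∃ c : A, ∃ p ∈ I • T, w = algebraMap A L c + p := by
      intro w hw
      rw [hOrder] at hw
      obtain ⟨u, hu, p, hp, rfl⟩ := Submodule.mem_sup.mp hw
      obtain ⟨c, rfl⟩ := Submodule.mem_one.mp hu
      exact ⟨c, p, hp, rfl⟩
    have hmul : ∀ u ∈ orderOfIdeal A L I, ∀ v ∈ orderOfIdeal A L I,
        u * v ∈ orderOfIdeal A L I := by
      intro u hu v hv
      obtain ⟨c, p, hp, rfl⟩ := hmem u hu
      obtain ⟨d, r, hr, rfl⟩ := hmem v hv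
      have expand : (algebraMap A L c + p) * (algebraMap A L d + r)
          = algebraMap A L (c * d) + (d • p + c • r + p * r) := by
        simp only [Algebra.smul_def, map_mul]
        ring
      rw [expand, hOrder]
      refine Submodule.add_mem _
        (Submodule.mem_sup_left (Submodule.mem_one.mpr ⟨c * d, rfl⟩))
        (Submodule.mem_sup_right ?_)
      exact Submodule.add_mem _
        (Submodule.add_mem _ ((I • T).smul_mem d hp) ((I • T).smul_mem c hr))
        (aux_smul_mul I T hTT (Submodule.mul_mem_mul hp hr))
    refine ⟨(orderOfIdeal A L I).toSubalgebra
      (Submodule.one_le.1 (h1O I)) (fun x y hx hy => hmul x hx y hy), rfl, ?_⟩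
    intro z hz
    exact (Subalgebra.mem_toSubmodule _).mp (hOle I (Submodule.mem_toSubalgebra.mp hz))
  -- Part 2: every order is an orderOfIdeal
  · intro O hO hOT
    set N : Submodule A L := Subalgebra.toSubmodule O with hN
    have hNT : N ≤ T := fun z hz => hOT hz
    have h1N : (1 : Submodule A L) ≤ N := Submodule.one_le.2 (one_mem O)
    have hmapN0 : Submodule.map π N ≠ ⊥ := by
      obtain ⟨z, hzO, hz⟩ := SetLike.exists_of_lt (lt_of_le_of_ne bot_le (Ne.symm hO) : (⊥ : Subalgebra A L) < O)
      intro h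
      have hmem : π z ∈ Submodule.map π N := Submodule.mem_map_of_mem hzO
      rw [h, Submodule.mem_bot] at hmem
      obtain ⟨a, ha⟩ := hkerT z (hNT hzO) hmem
      exact hz (by rw [Algebra.mem_bot]; exact ⟨a, ha⟩)
    obtain ⟨I, hI0, hIq⟩ := hdecomp (Submodule.map π N) (by rw [hq]; exact Submodule.map_mono hNT) hmapN0
    refine ⟨I, hI0, le_antisymm ?_ ?_⟩
    · refine hS N (orderOfIdeal A L I) hNT (hOle I) (h1O I) ?_
      rw [himg, ← hIq]
    · refine hS (orderOfIdeal A L I) N (hOle I) hNT h1N ?_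
      rw [himg, ← hIq]
  -- Part 3: conductor
  · intro I _ a
    constructor
    · intro H
      have hsub : Ideal.span {a} • T ≤ orderOfIdeal A L I := by
        rw [Submodule.smul_le]
        intro r hr z hz
        obtain ⟨c, rfl⟩ := Ideal.mem_span_singleton'.mp hr
        rw [mul_smul]
        exact (orderOfIdeal A L I).smul_mem c (H z hz)
      have hm := Submodule.map_mono (f := π) hsub
      rw [Submodule.map_smul'' (Ideal.span {a}) T π, himg] at hm
      have := hcancel (Ideal.span {a}) I hm
      exact this (Ideal.mem_span_singleton_self a)
    · intro ha z hz
      rw [hOrder]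
      exact Submodule.mem_sup_right (Submodule.smul_mem_smul ha (((Subalgebra.mem_toSubmodule _)).mpr hz))
  -- Part 4: inclusion iff
  · intro I J _ _
    constructor
    · intro h
      have hm := Submodule.map_mono (f := π) h
      rw [himg, himg] at hm
      exact hcancel J I hm
    · intro h
      rw [hOrder, hOrder]
      exact sup_le_sup_left (Submodule.smul_mono h le_rfl) _
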